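/- Essential uniqueness of the Bellman fixed point (Theorem 2, finite case): if x : T → ℝ≥0∞ satisfies F x = x and x q < ∞ for every q : T, then x = x*, where x* q = ⨆ k, (F^[k] 0) q is the least fixed point of F. -/

import Mathlib

open scoped ENNReal

/-- Finite `inf'` commutes with supremum of a monotone family. -/
lemma inf'_iSup_monotone {α : Type*} {s : Finset α} (hs : s.Nonempty)
    (g : α → ℕ → ℝ≥0∞) (hg : ∀ a, Monotone (g a)) :
    s.inf' hs (fun a => ⨆ k, g a k) = ⨆ k, s.inf' hs (fun a => g a k) := by
  apply le_antisymm
  · by_contra hlt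
    push_neg at hlt
    set S := ⨆ k, s.inf' hs (fun a => g a k) with hS
    have hak : ∀ a ∈ s, ∃ k, S < g a k := by
      intro a ha
      by_contra hno
      push_neg at hno
      exact absurd (Finset.inf'_le_of_le (f := fun a => ⨆ k, g a k) ha
        (iSup_le hno)) (not_le.mpr hlt)
    choose k hk using hak
    classical
    obtain ⟨a0, ha0, hmax⟩ := Finset.exists_max_image s (fun a => if h : a ∈ s then k a h else 0) hs
    set K := k a0 ha0 with hK
    have hKbig : ∀ a (ha : a ∈ s), S < g a K := by
      intro a ha
      have h1 : k a ha ≤ K := by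
        have := hmax a ha
        simpa [ha, ha0, hK] using this
      exact lt_of_lt_of_le (hk a ha) (hg a h1)
    obtain ⟨a1, ha1, heq⟩ := Finset.exists_mem_eq_inf' hs (fun a => g a K)
    have : S < s.inf' hs (fun a => g a K) := heq ▸ hKbig a1 ha1
    exact absurd (le_iSup (fun k => s.inf' hs (fun a => g a k)) K) (not_le.mpr this)
  · refine iSup_le fun K => Finset.le_inf' _ _ fun a ha => ?_
    exact Finset.inf'_le_of_le (f := fun a => g a K) ha (le_iSup (g a) K)

/-- Theorem 2 (finite case): essential uniqueness of the Bellman fixed point.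
Any everywhere-finite fixed point of `F` equals the least fixed point. -/
theorem bellman_fixed_point_unique {T Act : Type*} [Fintype T] [Nonempty T]
    (A : T → Finset Act) (hA : ∀ q, (A q).Nonempty)
    (c : T → Act → ℝ≥0∞) (hc : ∀ q, ∀ a ∈ A q, 0 < c q a ∧ c q a < ∞)
    (M : T → Act → T → ℝ≥0∞) (hM : ∀ q, ∀ a ∈ A q, ∀ q', M q a q' < ∞)
    (F : (T → ℝ≥0∞) → (T → ℝ≥0∞))
    (hF : ∀ x q, F x q = (A q).inf' (hA q) (fun a => c q a + ∑ q', M q a q' * x q'))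
    (x : T → ℝ≥0∞) (hx : F x = x) (hfin : ∀ q, x q < ∞) :
    x = fun q => ⨆ k, F^[k] 0 q := by
  classical
  set y : T → ℝ≥0∞ := fun q => ⨆ k, F^[k] 0 q with hy
  -- monotonicity of F
  have hmono : Monotone F := by
    intro u v huv q
    rw [hF, hF]
    refine Finset.le_inf' _ _ fun a ha => ?_
    exact Finset.inf'_le_of_le (f := fun a => c q a + ∑ q', M q a q' * u q') ha
      (add_le_add_right (Finset.sum_le_sum fun q' _ => mul_le_mul_right (huv q') _) _)
  -- the iterates are ≤ x
  have hle : ∀ k, F^[k] 0 ≤ x := by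
    intro k
    induction k with
    | zero => intro q; simp
    | succ k ih =>
      rw [Function.iterate_succ_apply']
      calc F (F^[k] 0) ≤ F x := hmono ih
        _ = x := hx
  have hyx : ∀ q, y q ≤ x q := fun q => iSup_le fun k => hle k q
  -- the iterates form a chain
  have hchain : ∀ k, F^[k] 0 ≤ F^[k + 1] 0 := by
    intro k
    induction k with
    | zero => intro q; simp
    | succ k ih =>
      rw [Function.iterate_succ_apply', Function.iterate_succ_apply']
      exact hmono ih
  have hmonoiter : ∀ q, Monotone (fun k => F^[k] 0 q) :=
    fun q => monotone_nat_of_le_succ fun k => hchain k q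
  -- y is a fixed point of F
  have hfix : F y = y := by
    funext q
    rw [hF]
    have hswap : ∀ a, (∑ q', M q a q' * y q') = ⨆ k, ∑ q', M q a q' * F^[k] 0 q' := by
      intro a
      simp only [hy]
      simp_rw [ENNReal.mul_iSup]
      exact (ENNReal.finsetSum_iSup_of_monotone
        (f := fun q' k => M q a q' * F^[k] 0 q')
        (fun q' i j hij => mul_le_mul_right (hmonoiter q' hij) _))
    have hinner : ∀ a, (c q a + ∑ q', M q a q' * y q')
        = ⨆ k, (c q a + ∑ q', M q a q' * F^[k] 0 q') := by
      intro a
      rw [hswap a, ENNReal.add_iSup]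
    simp_rw [hinner]
    rw [inf'_iSup_monotone (hA q) _ (fun a i j hij => by gcongr; exact hmonoiter _ hij)]
    have hstep : ∀ k, (A q).inf' (hA q) (fun a => c q a + ∑ q', M q a q' * F^[k] 0 q')
        = F^[k + 1] 0 q := by
      intro k
      rw [Function.iterate_succ_apply', hF]
    simp_rw [hstep]
    rw [hy]
    apply le_antisymm
    · exact iSup_le fun k => le_iSup (fun k => F^[k] 0 q) (k + 1)
    · exact iSup_le fun k => (hmonoiter q (Nat.le_succ k)).trans
        (le_iSup (fun k => F^[k + 1] 0 q) k)
  -- y is positive everywhere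
  have hypos : ∀ q, 0 < y q := by
    intro q
    have h1 : F^[1] 0 q ≤ y q := hy ▸ le_iSup (fun k => F^[k] 0 q) 1
    refine lt_of_lt_of_le ?_ h1
    simp only [Function.iterate_one, hF]
    obtain ⟨a, ha, heq⟩ := Finset.exists_mem_eq_inf' (hA q)
      (fun a => c q a + ∑ q', M q a q' * (0 : T → ℝ≥0∞) q')
    rw [heq]
    exact lt_of_lt_of_le (hc q a ha).1 le_self_add
  -- pick q0 maximizing x q / y q
  obtain ⟨q0, hq0⟩ := Finite.exists_max (fun q => x q / y q)
  set lam := x q0 / y q0 with hlam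
  have hyfin : ∀ q, y q < ∞ := fun q => lt_of_le_of_lt (hyx q) (hfin q)
  have hxle : ∀ q, x q ≤ lam * y q := by
    intro q
    have h1 : x q = (x q / y q) * y q :=
      (ENNReal.div_mul_cancel (hypos q).ne' (hyfin q).ne).symm
    rw [h1]
    exact mul_le_mul_left (hq0 q) _
  -- the action attaining the min at y q0
  obtain ⟨a0, ha0, heq0⟩ := Finset.exists_mem_eq_inf' (hA q0)
    (fun a => c q0 a + ∑ q', M q0 a q' * y q')
  have hyq0 : y q0 = c q0 a0 + ∑ q', M q0 a0 q' * y q' := by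
    conv_lhs => rw [← hfix]
    rw [hF]; exact heq0
  set S := ∑ q', M q0 a0 q' * y q' with hSdef
  have hSfin : S < ∞ := by
    refine ENNReal.sum_lt_top.mpr fun q' _ => ?_
    exact ENNReal.mul_lt_top (hM q0 a0 ha0 q') (hyfin q')
  have hlamfin : lam < ∞ := ENNReal.div_lt_top (hfin q0).ne (hypos q0).ne'
  -- key inequality
  have hxq0 : x q0 = lam * y q0 :=
    (ENNReal.div_mul_cancel (hypos q0).ne' (hyfin q0).ne).symm
  have hkey : lam * c q0 a0 + lam * S ≤ c q0 a0 + lam * S := by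
    have h1 : x q0 ≤ c q0 a0 + ∑ q', M q0 a0 q' * x q' := by
      conv_lhs => rw [← hx]
      rw [hF]
      exact Finset.inf'_le _ ha0
    have h2 : (∑ q', M q0 a0 q' * x q') ≤ lam * S := by
      rw [hSdef, Finset.mul_sum]
      refine Finset.sum_le_sum fun q' _ => ?_
      calc M q0 a0 q' * x q' ≤ M q0 a0 q' * (lam * y q') := by gcongr; exact hxle q'
        _ = lam * (M q0 a0 q' * y q') := by ring
    calc lam * c q0 a0 + lam * S = lam * (c q0 a0 + S) := by ring
      _ = lam * y q0 := by rw [← hyq0]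
      _ = x q0 := hxq0.symm
      _ ≤ c q0 a0 + ∑ q', M q0 a0 q' * x q' := h1
      _ ≤ c q0 a0 + lam * S := by gcongr
  have hlam1 : lam ≤ 1 := by
    have hcancel : lam * c q0 a0 ≤ c q0 a0 :=
      ENNReal.le_of_add_le_add_right (ENNReal.mul_lt_top hlamfin hSfin).ne hkey
    have hc0 := hc q0 a0 ha0
    have h2 : lam ≤ c q0 a0 / c q0 a0 :=
      (ENNReal.le_div_iff_mul_le (Or.inl hc0.1.ne') (Or.inl hc0.2.ne)).mpr hcancel
    rwa [ENNReal.div_self hc0.1.ne' hc0.2.ne] at h2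
  funext q
  refine le_antisymm ?_ (hyx q)
  calc x q ≤ lam * y q := hxle q
    _ ≤ 1 * y q := by gcongr
    _ = y q := one_mul _
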